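/- Let c1, c2, cf be positive reals with cf > 2·max(c1,c2), and define the series-system reward matrix r by r(DN,DN) = −cf, r(DN,Rep) = −(cf+c2), r(Rep,DN) = −(cf+c1), r(Rep,Rep) = −(c1+c2). Then (Rep,Rep) is the unique maximizer of r, and at any critical point (q1,q2) of the VDN least-squares loss, the greedy joint action (argmax of q1, argmax of q2) equals (Rep,Rep); hence VDN recovers the optimal joint action for the series system. -/

import Mathlib

/-- VDN least-squares loss in a two-agent, two-action matrix game.
Actions are indexed by `Fin 2` with `0 = DN` (do-nothing) and `1 = Rep` (repair). -/
noncomputable def vdnLoss (r : Fin 2 → Fin 2 → ℝ) (q1 q2 : Fin 2 → ℝ) : ℝ :=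
  ∑ i, ∑ j, (q1 i + q2 j - r i j) ^ 2

private lemma hd1 (a b x : ℝ) : HasDerivAt (fun t : ℝ => (t + a - b) ^ 2) (2 * (x + a - b)) x := by
  have := (((hasDerivAt_id x).add_const a).sub_const b).pow 2
  simpa [mul_comm, Pi.pow_def] using this

private lemma hd2 (p b x : ℝ) : HasDerivAt (fun t : ℝ => (p + t - b) ^ 2) (2 * (p + x - b)) x := by
  have := (((hasDerivAt_id x).const_add p).sub_const b).pow 2
  simpa [mul_comm, Pi.pow_def] using this

private lemma keyA (a b c d C x : ℝ) :
    deriv (fun t => (t + a - b) ^ 2 + (t + c - d) ^ 2 + C) x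
      = 2 * (x + a - b) + 2 * (x + c - d) :=
  ((((hd1 a b x).add (hd1 c d x)).add_const C)).deriv

private lemma keyB (a b c d C x : ℝ) :
    deriv (fun t => C + ((t + a - b) ^ 2 + (t + c - d) ^ 2)) x
      = 2 * (x + a - b) + 2 * (x + c - d) :=
  (((hd1 a b x).add (hd1 c d x)).const_add C).deriv

private lemma keyC (p b D q d E x : ℝ) :
    deriv (fun t => ((p + t - b) ^ 2 + D) + ((q + t - d) ^ 2 + E)) x
      = 2 * (p + x - b) + 2 * (q + x - d) :=
  (((hd2 p b x).add_const D).add ((hd2 q d x).add_const E)).deriv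

private lemma keyD (D p b E q d x : ℝ) :
    deriv (fun t => (D + (p + t - b) ^ 2) + (E + (q + t - d) ^ 2)) x
      = 2 * (p + x - b) + 2 * (q + x - d) :=
  (((hd2 p b x).const_add D).add ((hd2 q d x).const_add E)).deriv

/-- In the series system, `(Rep, Rep)` is the unique maximizer of the reward,
and at any critical point of the VDN loss the greedy joint action is
`(Rep, Rep)`: VDN recovers the optimal joint action. -/
theorem vdn_series_optimal (c1 c2 cf : ℝ)
    (hc1 : 0 < c1) (hc2 : 0 < c2) (hcf : 0 < cf)
    (hcfmax : cf > 2 * max c1 c2)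
    (r : Fin 2 → Fin 2 → ℝ)
    (hr00 : r 0 0 = -cf) (hr01 : r 0 1 = -(cf + c2))
    (hr10 : r 1 0 = -(cf + c1)) (hr11 : r 1 1 = -(c1 + c2))
    (q1 q2 : Fin 2 → ℝ)
    (hcrit1 : ∀ a : Fin 2,
      deriv (fun t => vdnLoss r (Function.update q1 a t) q2) (q1 a) = 0)
    (hcrit2 : ∀ a : Fin 2,
      deriv (fun t => vdnLoss r q1 (Function.update q2 a t)) (q2 a) = 0) :
    (∀ a b : Fin 2, (a, b) ≠ ((1 : Fin 2), (1 : Fin 2)) → r a b < r 1 1) ∧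
    q1 1 > q1 0 ∧ q2 1 > q2 0 := by
  have hm1 : 2 * c1 < cf := lt_of_le_of_lt (by nlinarith [le_max_left c1 c2]) hcfmax
  have hm2 : 2 * c2 < cf := lt_of_le_of_lt (by nlinarith [le_max_right c1 c2]) hcfmax
  have h10 := hcrit1 0
  have h11 := hcrit1 1
  have h20 := hcrit2 0
  have h21 := hcrit2 1
  simp only [vdnLoss, Fin.sum_univ_two, Function.update_self,
    Function.update_of_ne (by decide : (1:Fin 2) ≠ 0),
    Function.update_of_ne (by decide : (0:Fin 2) ≠ 1)] at h10 h11 h20 h21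
  rw [keyA] at h10
  rw [keyB] at h11
  rw [keyC] at h20
  rw [keyD] at h21
  refine ⟨?_, by linarith, by linarith⟩
  intro a b hab
  fin_cases a <;> fin_cases b <;> simp_all <;> linarith
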